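/- Let n be a positive natural number and σ > 0. Let X be a random vector in ℝ^n whose coordinates are independent Gaussian random variables with mean 0 and variance σ². Then for every ε with 0 < ε ≤ √n, the probability that |‖X‖ − σ√n| ≤ σε is at least 1 − 2·exp(−ε²/16), where ‖·‖ denotes the Euclidean norm. (Equivalently, the product measure ⊗_{i<n} N(0, σ²) of the annulus {x ∈ ℝ^n : σ√n − σε ≤ ‖x‖ ≤ σ√n + σε} is at least 1 − 2·exp(−ε²/16).) -/

import Mathlib

open MeasureTheory ProbabilityTheory Real
open scoped NNReal ENNReal


lemma gauss_exp_sq (σ : ℝ) (hσ : 0 < σ) (t : ℝ) (ht : 2 * t * σ ^ 2 < 1) :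
    Integrable (fun x => exp (t * x ^ 2)) (gaussianReal 0 ⟨σ ^ 2, sq_nonneg σ⟩) ∧
    ∫ x, exp (t * x ^ 2) ∂(gaussianReal 0 ⟨σ ^ 2, sq_nonneg σ⟩)
      = (Real.sqrt (1 - 2 * t * σ ^ 2))⁻¹ := by
  set v : ℝ≥0 := ⟨σ ^ 2, sq_nonneg σ⟩ with hv
  have hv0 : v ≠ 0 := by
    simp only [hv, ne_eq, ← NNReal.coe_eq_zero, NNReal.coe_mk]
    exact fun h => (ne_of_gt (by positivity : (0:ℝ) < σ ^ 2)) (congrArg Subtype.val h)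
  have hvc : (v : ℝ) = σ ^ 2 := rfl
  have hb : (0:ℝ) < 1 / (2 * σ ^ 2) - t := by
    rw [sub_pos, lt_div_iff₀ (by positivity)]
    linarith
  have hrw : gaussianReal 0 v
      = volume.withDensity (fun x => ((gaussianPDFReal 0 v x).toNNReal : ℝ≥0∞)) := by
    rw [gaussianReal_of_var_ne_zero _ hv0, gaussianPDF_def]
    rfl
  have hmeas : Measurable fun x => (gaussianPDFReal 0 v x).toNNReal :=
    (measurable_gaussianPDFReal 0 v).real_toNNReal
  have hsmul : ∀ x : ℝ, ((gaussianPDFReal 0 v x).toNNReal : ℝ≥0) • exp (t * x ^ 2)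
      = (Real.sqrt (2 * π * σ ^ 2))⁻¹ * exp (-(1 / (2 * σ ^ 2) - t) * x ^ 2) := by
    intro x
    rw [NNReal.smul_def, smul_eq_mul, Real.coe_toNNReal _ (gaussianPDFReal_nonneg 0 v x),
      gaussianPDFReal_def]
    simp only [hvc, sub_zero]
    rw [mul_assoc, ← Real.exp_add]
    congr 1
    field_simp
    ring
  have hint : Integrable (fun x => exp (t * x ^ 2)) (gaussianReal 0 v) := by
    rw [hrw, integrable_withDensity_iff_integrable_smul hmeas]
    refine (Integrable.const_mul (integrable_exp_neg_mul_sq hb)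
      ((Real.sqrt (2 * π * σ ^ 2))⁻¹)).congr
      (Filter.Eventually.of_forall fun x => ?_)
    exact (hsmul x).symm
  refine ⟨hint, ?_⟩
  rw [hrw, integral_withDensity_eq_integral_smul hmeas]
  simp_rw [hsmul]
  rw [integral_const_mul, integral_gaussian]
  rw [show π / (1 / (2 * σ ^ 2) - t) = (2 * π * σ ^ 2) / (1 - 2 * t * σ ^ 2) by
    field_simp]
  have h1 : (0:ℝ) < 1 - 2 * t * σ ^ 2 := by linarith
  have h2 : (0:ℝ) < 2 * π * σ ^ 2 := by positivity
  rw [Real.sqrt_div h2.le]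
  rw [div_eq_mul_inv, ← mul_assoc, inv_mul_cancel₀ (by positivity), one_mul]

lemma pi_exp_sq (n : ℕ) (σ : ℝ) (hσ : 0 < σ) (t : ℝ) (ht : 2 * t * σ ^ 2 < 1) :
    Integrable (fun x : Fin n → ℝ => exp (t * ‖WithLp.toLp 2 x‖ ^ 2))
      (Measure.pi fun _ : Fin n => gaussianReal 0 ⟨σ ^ 2, sq_nonneg σ⟩) ∧
    ∫ x : Fin n → ℝ, exp (t * ‖WithLp.toLp 2 x‖ ^ 2)
        ∂(Measure.pi fun _ : Fin n => gaussianReal 0 ⟨σ ^ 2, sq_nonneg σ⟩)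
      = ((Real.sqrt (1 - 2 * t * σ ^ 2))⁻¹) ^ n := by
  have hnorm : ∀ x : Fin n → ℝ,
      exp (t * ‖WithLp.toLp 2 x‖ ^ 2) = ∏ i, exp (t * (x i) ^ 2) := by
    intro x
    rw [← Real.exp_sum, EuclideanSpace.norm_eq, Real.sq_sqrt (by positivity), Finset.mul_sum]
    simp [Real.norm_eq_abs, sq_abs]
  letI : MeasureSpace ℝ := ⟨gaussianReal 0 ⟨σ ^ 2, sq_nonneg σ⟩⟩
  haveI hP : IsProbabilityMeasure (gaussianReal 0 ⟨σ ^ 2, sq_nonneg σ⟩) :=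
    instIsProbabilityMeasureGaussianReal _ _
  haveI : SigmaFinite (volume : Measure ℝ) :=
    inferInstanceAs (SigmaFinite (gaussianReal 0 ⟨σ ^ 2, sq_nonneg σ⟩))
  have hI := gauss_exp_sq σ hσ t ht
  constructor
  · have := Integrable.fintype_prod (ι := Fin n) (E := ℝ)
      (f := fun _ y => exp (t * y ^ 2)) (fun _ => hI.1)
    exact (this.congr (Filter.Eventually.of_forall fun x => (hnorm x).symm))
  · calc ∫ x : Fin n → ℝ, exp (t * ‖WithLp.toLp 2 x‖ ^ 2)
          ∂(Measure.pi fun _ : Fin n => gaussianReal 0 ⟨σ ^ 2, sq_nonneg σ⟩)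
        = ∫ x : Fin n → ℝ, ∏ i, exp (t * (x i) ^ 2) := by
          simp_rw [hnorm]; rfl
      _ = (∫ y : ℝ, exp (t * y ^ 2)) ^ Fintype.card (Fin n) :=
          integral_fintype_prod_eq_pow (ι := Fin n) (fun y => exp (t * y ^ 2))
      _ = ((Real.sqrt (1 - 2 * t * σ ^ 2))⁻¹) ^ n := by
          rw [Fintype.card_fin]
          exact congrArg (· ^ n) hI.2

lemma tail_up (n : ℕ) (σ : ℝ) (hσ : 0 < σ) (t : ℝ) (ht0 : 0 ≤ t) (ht : 2 * t * σ ^ 2 < 1)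
    (a : ℝ) :
    ((Measure.pi fun _ : Fin n => gaussianReal 0 ⟨σ ^ 2, sq_nonneg σ⟩)
        {x : Fin n → ℝ | a ≤ ‖WithLp.toLp 2 x‖ ^ 2}).toReal
      ≤ exp (-t * a) * ((Real.sqrt (1 - 2 * t * σ ^ 2))⁻¹) ^ n := by
  haveI : IsProbabilityMeasure (Measure.pi fun _ : Fin n =>
      gaussianReal 0 ⟨σ ^ 2, sq_nonneg σ⟩) :=
      @Measure.pi.instIsProbabilityMeasure _ _ _ _ _ (fun _ => instIsProbabilityMeasureGaussianReal _ _)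
  have h := measure_ge_le_exp_mul_mgf (μ := Measure.pi fun _ : Fin n =>
      gaussianReal 0 ⟨σ ^ 2, sq_nonneg σ⟩) (X := fun x : Fin n → ℝ => ‖WithLp.toLp 2 x‖ ^ 2)
      a ht0 (pi_exp_sq n σ hσ t ht).1
  refine h.trans ?_
  rw [mgf]
  rw [(pi_exp_sq n σ hσ t ht).2]

lemma tail_low (n : ℕ) (σ : ℝ) (hσ : 0 < σ) (t : ℝ) (ht0 : t ≤ 0) (ht : 2 * t * σ ^ 2 < 1)
    (a : ℝ) :
    ((Measure.pi fun _ : Fin n => gaussianReal 0 ⟨σ ^ 2, sq_nonneg σ⟩)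
        {x : Fin n → ℝ | ‖WithLp.toLp 2 x‖ ^ 2 ≤ a}).toReal
      ≤ exp (-t * a) * ((Real.sqrt (1 - 2 * t * σ ^ 2))⁻¹) ^ n := by
  haveI : IsProbabilityMeasure (Measure.pi fun _ : Fin n =>
      gaussianReal 0 ⟨σ ^ 2, sq_nonneg σ⟩) :=
      @Measure.pi.instIsProbabilityMeasure _ _ _ _ _ (fun _ => instIsProbabilityMeasureGaussianReal _ _)
  have h := measure_le_le_exp_mul_mgf (μ := Measure.pi fun _ : Fin n =>
      gaussianReal 0 ⟨σ ^ 2, sq_nonneg σ⟩) (X := fun x : Fin n → ℝ => ‖WithLp.toLp 2 x‖ ^ 2)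
      a ht0 (pi_exp_sq n σ hσ t ht).1
  refine h.trans ?_
  rw [mgf]
  rw [(pi_exp_sq n σ hσ t ht).2]

lemma bound_up (n : ℕ) (s ε : ℝ) (hn : (n : ℝ) = s ^ 2) (hε : 0 < ε) (hεs : ε ≤ s) :
    exp (-(ε / (2 * s) / 2) * (s + ε) ^ 2) * ((Real.sqrt (1 - ε / (2 * s)))⁻¹) ^ n
      ≤ exp (-ε ^ 2 / 4) := by
  have hs : 0 < s := lt_of_lt_of_le hε hεs
  set l : ℝ := ε / (2 * s) with hl
  have hl0 : 0 < l := by positivity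
  have hl1 : l ≤ 1 / 2 := by
    rw [hl, div_le_div_iff₀ (by positivity) (by norm_num)]
    linarith
  have h1l : 0 < 1 - l := by linarith
  have h2sl : 2 * s * l = ε := by rw [hl]; field_simp
  have hrw : ((Real.sqrt (1 - l))⁻¹) ^ n = exp ((n : ℝ) * (-(Real.log (1 - l) / 2))) := by
    rw [← Real.log_sqrt h1l.le, Real.exp_nat_mul, Real.exp_neg,
      Real.exp_log (Real.sqrt_pos.2 h1l)]
  rw [hrw, ← Real.exp_add, Real.exp_le_exp]
  have hlog : -Real.log (1 - l) ≤ l + 2 * l ^ 2 := by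
    have h := Real.log_le_sub_one_of_pos (x := (1 - l)⁻¹) (by positivity)
    rw [Real.log_inv] at h
    have : (1 - l)⁻¹ - 1 = l / (1 - l) := by field_simp; ring
    rw [this] at h
    refine h.trans ?_
    rw [div_le_iff₀ h1l]
    nlinarith
  have key : (n : ℝ) * (-(Real.log (1 - l) / 2)) ≤ s ^ 2 * (l + 2 * l ^ 2) / 2 := by
    rw [hn]
    nlinarith [sq_nonneg s]
  nlinarith [mul_pos hl0 (pow_pos hε 2), sq_nonneg (s * l),
    mul_nonneg hl0.le (sq_nonneg ε)]

lemma bound_low (n : ℕ) (s ε : ℝ) (hn : (n : ℝ) = s ^ 2) (hε : 0 < ε) (hεs : ε ≤ s) :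
    exp (ε / (2 * s) / 2 * (s - ε) ^ 2) * ((Real.sqrt (1 + ε / (2 * s)))⁻¹) ^ n
      ≤ exp (-ε ^ 2 / 8) := by
  have hs : 0 < s := lt_of_lt_of_le hε hεs
  set l : ℝ := ε / (2 * s) with hl
  have hl0 : 0 < l := by positivity
  have hl1 : l ≤ 1 / 2 := by
    rw [hl, div_le_div_iff₀ (by positivity) (by norm_num)]
    linarith
  have h1l : 0 < 1 + l := by linarith
  have h2sl : 2 * s * l = ε := by rw [hl]; field_simp
  have hrw : ((Real.sqrt (1 + l))⁻¹) ^ n = exp ((n : ℝ) * (-(Real.log (1 + l) / 2))) := by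
    rw [← Real.log_sqrt h1l.le, Real.exp_nat_mul, Real.exp_neg,
      Real.exp_log (Real.sqrt_pos.2 h1l)]
  rw [hrw, ← Real.exp_add, Real.exp_le_exp]
  have hlog : l - l ^ 2 ≤ Real.log (1 + l) := by
    have h := Real.log_le_sub_one_of_pos (x := (1 + l)⁻¹) (by positivity)
    rw [Real.log_inv] at h
    have h' : 1 - (1 + l)⁻¹ ≤ Real.log (1 + l) := by linarith
    refine le_trans ?_ h'
    have hinv : (1 + l) * (1 + l)⁻¹ = 1 := mul_inv_cancel₀ (ne_of_gt h1l)
    have hinvpos : 0 < (1 + l)⁻¹ := inv_pos.2 h1l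
    nlinarith [mul_pos hl0 hinvpos, mul_pos (mul_pos hl0 hl0) hinvpos]
  have key : (n : ℝ) * (-(Real.log (1 + l) / 2)) ≤ -(s ^ 2 * (l - l ^ 2) / 2) := by
    rw [hn]
    nlinarith [sq_nonneg s]
  nlinarith [mul_nonneg hl0.le (sq_nonneg ε), sq_nonneg (s * l)]


/-- **Scaled Gaussian Annulus Theorem.** If `X ∼ N(0, σ²I)` on `ℝ^n` (the product of
one-dimensional Gaussians of mean `0` and variance `σ²`), then for `0 < ε ≤ √n`, the
probability that `|‖X‖ - σ√n| ≤ σε` is at least `1 - 2 exp(-ε²/16)`. -/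
theorem gaussian_annulus (n : ℕ) (hn : 0 < n) (σ : ℝ) (hσ : 0 < σ)
    (ε : ℝ) (hε : 0 < ε) (hε' : ε ≤ Real.sqrt n) :
    ENNReal.ofReal (1 - 2 * Real.exp (-ε ^ 2 / 16)) ≤
      (Measure.pi fun _ : Fin n => gaussianReal 0 ⟨σ ^ 2, sq_nonneg σ⟩)
        (WithLp.toLp 2 ⁻¹' {x : EuclideanSpace ℝ (Fin n) | |‖x‖ - σ * Real.sqrt n| ≤ σ * ε}) := by
  set μ := Measure.pi fun _ : Fin n => gaussianReal 0 ⟨σ ^ 2, sq_nonneg σ⟩ with hμ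
  haveI : IsProbabilityMeasure μ :=
    @Measure.pi.instIsProbabilityMeasure _ _ _ _ _ (fun _ => instIsProbabilityMeasureGaussianReal _ _)
  set s := Real.sqrt n with hsdef
  have hs0 : 0 < s := Real.sqrt_pos.2 (by exact_mod_cast hn)
  have hns : (n : ℝ) = s ^ 2 := (Real.sq_sqrt (by positivity)).symm
  have hεs : ε ≤ s := hε'
  have hl1 : ε / (2 * s) ≤ 1 / 2 := by
    rw [div_le_div_iff₀ (by positivity) (by norm_num)]
    linarith
  set t : ℝ := ε / (4 * σ ^ 2 * s) with htdef
  have ht0 : 0 ≤ t := by positivity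
  have htσ : 2 * t * σ ^ 2 = ε / (2 * s) := by rw [htdef]; field_simp; ring
  -- upper tail
  have hup : (μ {x : Fin n → ℝ | (σ * (s + ε)) ^ 2 ≤ ‖WithLp.toLp 2 x‖ ^ 2}).toReal
      ≤ exp (-ε ^ 2 / 4) := by
    have h := tail_up n σ hσ t ht0 (by rw [htσ]; linarith) ((σ * (s + ε)) ^ 2)
    refine h.trans ?_
    rw [htσ]
    have e1 : -t * (σ * (s + ε)) ^ 2 = -(ε / (2 * s) / 2) * (s + ε) ^ 2 := by
      rw [htdef]; field_simp; ring
    rw [e1]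
    exact bound_up n s ε hns hε hεs
  -- lower tail
  have hlow : (μ {x : Fin n → ℝ | ‖WithLp.toLp 2 x‖ ^ 2 ≤ (σ * (s - ε)) ^ 2}).toReal
      ≤ exp (-ε ^ 2 / 8) := by
    have h := tail_low n σ hσ (-t) (neg_nonpos.2 ht0)
      (by
        rw [show 2 * -t * σ ^ 2 = -(2 * t * σ ^ 2) by ring, htσ]
        have := div_pos hε (by positivity : (0:ℝ) < 2 * s)
        linarith) ((σ * (s - ε)) ^ 2)
    refine h.trans ?_
    rw [show 2 * -t * σ ^ 2 = -(2 * t * σ ^ 2) by ring, htσ, sub_neg_eq_add]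
    have e1 : - -t * (σ * (s - ε)) ^ 2 = ε / (2 * s) / 2 * (s - ε) ^ 2 := by
      rw [htdef]; field_simp; ring
    rw [e1]
    exact bound_low n s ε hns hε hεs
  -- set inclusion
  set G : Set (Fin n → ℝ) :=
    WithLp.toLp 2 ⁻¹' {x : EuclideanSpace ℝ (Fin n) | |‖x‖ - σ * s| ≤ σ * ε} with hG
  have hGm : MeasurableSet G :=
    (isClosed_le (((continuous_norm.comp (PiLp.continuous_toLp 2 _)).sub continuous_const).abs)
      continuous_const).measurableSet
  have hsub : Gᶜ ⊆ {x : Fin n → ℝ | (σ * (s + ε)) ^ 2 ≤ ‖WithLp.toLp 2 x‖ ^ 2}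
      ∪ {x : Fin n → ℝ | ‖WithLp.toLp 2 x‖ ^ 2 ≤ (σ * (s - ε)) ^ 2} := by
    intro x hx
    simp only [hG, Set.mem_compl_iff, Set.mem_preimage, Set.mem_setOf_eq, not_le] at hx
    rcases lt_abs.1 hx with h | h
    · left
      have : σ * (s + ε) ≤ ‖WithLp.toLp 2 x‖ := by nlinarith
      exact pow_le_pow_left₀ (by positivity) this 2
    · right
      have h1 : ‖WithLp.toLp 2 x‖ ≤ σ * (s - ε) := by nlinarith
      exact pow_le_pow_left₀ (norm_nonneg _) h1 2
  -- measure arithmetic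
  have hA : μ {x : Fin n → ℝ | (σ * (s + ε)) ^ 2 ≤ ‖WithLp.toLp 2 x‖ ^ 2}
      ≤ ENNReal.ofReal (exp (-ε ^ 2 / 4)) :=
    (ENNReal.le_ofReal_iff_toReal_le (measure_ne_top μ _) (Real.exp_nonneg _)).2 hup
  have hB : μ {x : Fin n → ℝ | ‖WithLp.toLp 2 x‖ ^ 2 ≤ (σ * (s - ε)) ^ 2}
      ≤ ENNReal.ofReal (exp (-ε ^ 2 / 8)) :=
    (ENNReal.le_ofReal_iff_toReal_le (measure_ne_top μ _) (Real.exp_nonneg _)).2 hlow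
  have hcompl : μ Gᶜ ≤ ENNReal.ofReal (2 * exp (-ε ^ 2 / 16)) := by
    refine (measure_mono hsub).trans ((measure_union_le _ _).trans ?_)
    refine (add_le_add hA hB).trans ?_
    rw [← ENNReal.ofReal_add (Real.exp_nonneg _) (Real.exp_nonneg _)]
    refine ENNReal.ofReal_le_ofReal ?_
    have h1 : exp (-ε ^ 2 / 4) ≤ exp (-ε ^ 2 / 16) := by
      rw [Real.exp_le_exp]; nlinarith [sq_nonneg ε]
    have h2 : exp (-ε ^ 2 / 8) ≤ exp (-ε ^ 2 / 16) := by
      rw [Real.exp_le_exp]; nlinarith [sq_nonneg ε]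
    linarith
  have hGμ : μ G = 1 - μ Gᶜ := by
    have h := measure_compl hGm.compl (measure_ne_top μ Gᶜ)
    rw [compl_compl] at h
    have hu : μ (Set.univ : Set (Fin n → ℝ)) = 1 := this.measure_univ
    exact h.trans (congrArg (· - μ Gᶜ) hu)
  rw [hGμ]
  rw [ENNReal.ofReal_sub _ (by positivity), ENNReal.ofReal_one]
  exact tsub_le_tsub_left hcompl 1
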